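/- Let (p,Q) be a block-model parameter pair on k communities whose matrix Q is diagonal, i.e. Q i j = 0 whenever i ≠ j. Then for every connected finite simple graph H with at least one edge, Ψ_{p,Q}(H) ≤ max(Ψ_{p,Q}(Star_1), Ψ_{p,Q}(Star_2)). -/

import Mathlib

set_option linter.unusedVariables false

open Finset

open Finset

/-- The Fourier coefficient Φ_{p,Q}(H) of a finite simple graph `H`. -/
noncomputable def Phi {k : ℕ} (p : Fin k → ℝ) (Q : Fin k → Fin k → ℝ)
    (hQ : ∀ i j, Q i j = Q j i) {V : Type} [Fintype V] [DecidableEq V]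
    (H : SimpleGraph V) [DecidableRel H.Adj] : ℝ :=
  ∑ x : V → Fin k, (∏ v, p (x v)) *
    ∏ e ∈ H.edgeFinset,
      Sym2.lift ⟨fun u v => Q (x u) (x v), fun u v => hQ (x u) (x v)⟩ e

/-- The partition value Ψ_{p,Q}(H) = |Φ_{p,Q}(H)|^{1/|V(H)|}. -/
noncomputable def Psi {k : ℕ} (p : Fin k → ℝ) (Q : Fin k → Fin k → ℝ)
    (hQ : ∀ i j, Q i j = Q j i) {V : Type} [Fintype V] [DecidableEq V]
    (H : SimpleGraph V) [DecidableRel H.Adj] : ℝ :=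
  |Phi p Q hQ H| ^ ((Fintype.card V : ℝ)⁻¹)

/-- The star graph with one center (vertex 0) joined to `t` leaves. -/
def StarGraph (t : ℕ) : SimpleGraph (Fin (t + 1)) where
  Adj u v := u ≠ v ∧ (u = 0 ∨ v = 0)
  symm := ⟨fun u v h => ⟨h.1.symm, h.2.symm⟩⟩
  loopless := ⟨fun u h => h.1 rfl⟩

instance (t : ℕ) : DecidableRel (StarGraph t).Adj :=
  fun u v => inferInstanceAs (Decidable (u ≠ v ∧ (u = 0 ∨ v = 0)))

/-- The cycle graph on 4 vertices. -/
def Cyc4 : SimpleGraph (Fin 4) where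
  Adj u v := u ≠ v ∧ ((u.val + 1) % 4 = v.val ∨ (v.val + 1) % 4 = u.val)
  symm := ⟨fun u v h => ⟨h.1.symm, h.2.symm⟩⟩
  loopless := ⟨fun u h => h.1 rfl⟩

instance : DecidableRel Cyc4.Adj :=
  fun u v => inferInstanceAs
    (Decidable (u ≠ v ∧ ((u.val + 1) % 4 = v.val ∨ (v.val + 1) % 4 = u.val)))


section Aux
set_option linter.unusedSectionVars false

variable {k : ℕ} {V : Type} [Fintype V] [DecidableEq V]

private lemma exists_adj_ne' {H : SimpleGraph V} (x : V → Fin k) :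
    ∀ {a b : V}, H.Walk a b → x a ≠ x b → ∃ u v, H.Adj u v ∧ x u ≠ x v := by
  intro a b w
  induction w with
  | nil => intro h; exact absurd rfl h
  | @cons a c b h w ih =>
    intro hne
    by_cases hx : x a = x c
    · exact ih (hx ▸ hne)
    · exact ⟨a, c, h, hx⟩

private lemma Phi_diag (p : Fin k → ℝ) (Q : Fin k → Fin k → ℝ)
    (hQ : ∀ i j, Q i j = Q j i) (hdiag : ∀ i j, i ≠ j → Q i j = 0)
    (H : SimpleGraph V) [DecidableRel H.Adj] (hconn : H.Connected) :
    Phi p Q hQ H = ∑ i, p i ^ (Fintype.card V) * Q i i ^ H.edgeFinset.card := by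
  classical
  obtain ⟨v₀⟩ := hconn.nonempty
  rw [Phi]
  rw [← Finset.sum_subset
      (Finset.subset_univ (Finset.univ.image (fun i : Fin k => (fun _ : V => i)))) ?_]
  · rw [Finset.sum_image (fun a _ b _ hab => congrFun hab v₀)]
    refine Finset.sum_congr rfl fun i _ => ?_
    congr 1
    · simp [Finset.prod_const]
    · rw [Finset.prod_congr rfl (fun e _ => ?_), Finset.prod_const]
      induction e using Sym2.ind
      simp
  · intro x _ hx
    have hab : ∃ a b, x a ≠ x b := by
      by_contra hcon
      push_neg at hcon
      exact hx (Finset.mem_image.2 ⟨x v₀, Finset.mem_univ _,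
        funext fun v => hcon v₀ v⟩)
    obtain ⟨a, b, hab⟩ := hab
    obtain ⟨u, v, huv, hxuv⟩ := exists_adj_ne' x ((hconn.preconnected a b).some) hab
    have hmem : s(u, v) ∈ H.edgeFinset := SimpleGraph.mem_edgeFinset.2 huv
    rw [Finset.prod_eq_zero hmem (by simpa using hdiag _ _ hxuv), mul_zero]

private lemma card_le_of_connected (H : SimpleGraph V) [DecidableRel H.Adj]
    (hconn : H.Connected) : Fintype.card V ≤ H.edgeFinset.card + 1 := by
  classical
  obtain ⟨r⟩ := hconn.nonempty
  have hex : ∀ v : V, v ≠ r → ∃ u, H.Adj v u ∧ H.dist u r + 1 = H.dist v r := by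
    intro v hv
    obtain ⟨w, hw⟩ := (hconn.preconnected v r).exists_walk_length_eq_dist
    cases w with
    | nil => exact absurd rfl hv
    | @cons a c b h w' =>
      refine ⟨c, h, le_antisymm ?_ ?_⟩
      · have h1 := H.dist_le w'
        simp only [SimpleGraph.Walk.length_cons] at hw
        omega
      · obtain ⟨w2, hw2⟩ := (hconn.preconnected c r).exists_walk_length_eq_dist
        have := H.dist_le (SimpleGraph.Walk.cons h w2)
        simpa [hw2] using this
  choose f hf using hex
  have hinj : Set.InjOn (fun v : V => if h : v = r then s(r, r) else s(v, f v h))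
      ↑(Finset.univ.erase r) := by
    intro u hu v hv huv
    have hu' : u ≠ r := by simpa using hu
    have hv' : v ≠ r := by simpa using hv
    simp only [dif_neg hu', dif_neg hv', Sym2.eq_iff] at huv
    rcases huv with ⟨h1, _⟩ | ⟨h1, h2⟩
    · exact h1
    · exfalso
      have d1 := (hf u hu').2
      have d2 := (hf v hv').2
      rw [h2] at d1
      rw [← h1] at d2
      omega
  have hmap : ∀ v ∈ Finset.univ.erase r,
      (fun v : V => if h : v = r then s(r, r) else s(v, f v h)) v ∈ H.edgeFinset := by
    intro v hv
    have hv' : v ≠ r := (Finset.mem_erase.1 hv).1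
    simp only [dif_neg hv']
    exact SimpleGraph.mem_edgeFinset.2 ((hf v hv').1)
  have := Finset.card_le_card_of_injOn _ hmap hinj
  rw [Finset.card_erase_of_mem (Finset.mem_univ r), Finset.card_univ] at this
  have hne : Nonempty V := ⟨r⟩
  have : 1 ≤ Fintype.card V := Fintype.card_pos
  omega

private lemma rpow_add_le_aux {x y r : ℝ} (hx : 0 ≤ x) (hy : 0 ≤ y) (hr : 1 ≤ r) :
    x ^ r + y ^ r ≤ (x + y) ^ r := by
  have hsplit : ∀ a : ℝ, 0 ≤ a → a ^ r = a * a ^ (r - 1) := by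
    intro a ha
    have h1 : a ^ r = a ^ (1 + (r - 1)) := by congr 1; ring
    rw [h1, Real.rpow_add' ha (ne_of_gt (by linarith : (0:ℝ) < 1 + (r - 1))),
      Real.rpow_one]
  have key : ∀ a b : ℝ, 0 ≤ a → 0 ≤ b → a ^ r ≤ a * (a + b) ^ (r - 1) := by
    intro a b ha hb
    rw [hsplit a ha]
    exact mul_le_mul_of_nonneg_left
      (Real.rpow_le_rpow ha (by linarith) (by linarith)) ha
  calc x ^ r + y ^ r ≤ x * (x + y) ^ (r - 1) + y * (y + x) ^ (r - 1) :=
        add_le_add (key x y hx hy) (key y x hy hx)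
    _ = (x + y) * (x + y) ^ (r - 1) := by rw [add_comm y x]; ring
    _ = (x + y) ^ r := (hsplit _ (by linarith)).symm

private lemma sum_rpow_le_aux {ι : Type*} (s : Finset ι) (f : ι → ℝ)
    (hf : ∀ i, 0 ≤ f i) {r : ℝ} (hr : 1 ≤ r) :
    ∑ i ∈ s, f i ^ r ≤ (∑ i ∈ s, f i) ^ r := by
  classical
  induction s using Finset.induction with
  | empty => simp [Real.zero_rpow (by linarith : r ≠ 0)]
  | @insert a s ha ih =>
    rw [Finset.sum_insert ha, Finset.sum_insert ha]
    have h1 : 0 ≤ ∑ i ∈ s, f i := Finset.sum_nonneg fun i _ => hf i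
    calc f a ^ r + ∑ i ∈ s, f i ^ r
        ≤ f a ^ r + (∑ i ∈ s, f i) ^ r := add_le_add le_rfl ih
      _ ≤ (f a + ∑ i ∈ s, f i) ^ r := rpow_add_le_aux (hf a) h1 hr


private lemma star_connected (t : ℕ) : (StarGraph t).Connected := by
  have h : ∀ w : Fin (t+1), (StarGraph t).Reachable w 0 := by
    intro w
    by_cases hw : w = 0
    · rw [hw]
    · exact SimpleGraph.Adj.reachable (show w ≠ 0 ∧ (w = 0 ∨ (0 : Fin (t+1)) = 0) from ⟨hw, Or.inr rfl⟩)
  exact SimpleGraph.Connected.mk (fun u v => (h u).trans (h v).symm)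

end Aux


/-- In a diagonal SBM, every connected graph with at least one edge
has partition value at most that of the 1-star or the 2-star. -/
theorem stmt0 {k : ℕ} (hk : 1 ≤ k) (p : Fin k → ℝ) (Q : Fin k → Fin k → ℝ)
    (hp : ∀ i, 0 ≤ p i) (hpsum : ∑ i, p i = 1)
    (hQ : ∀ i j, Q i j = Q j i) (hQbd : ∀ i j, |Q i j| ≤ 1)
    (hdiag : ∀ i j, i ≠ j → Q i j = 0)
    {V : Type} [Fintype V] [DecidableEq V] (H : SimpleGraph V) [DecidableRel H.Adj]
    (hconn : H.Connected) (hE : 1 ≤ H.edgeFinset.card) :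
    Psi p Q hQ H ≤ max (Psi p Q hQ (StarGraph 1)) (Psi p Q hQ (StarGraph 2)) := by
  classical
  have hΦ := Phi_diag p Q hQ hdiag H hconn
  have he1 : (StarGraph 1).edgeFinset.card = 1 := by decide
  have he2 : (StarGraph 2).edgeFinset.card = 2 := by decide
  have hΦ1 : Phi p Q hQ (StarGraph 1) = ∑ i, p i ^ 2 * Q i i ^ 1 := by
    rw [Phi_diag p Q hQ hdiag _ (star_connected 1), he1]
    norm_num
  have hΦ2 : Phi p Q hQ (StarGraph 2) = ∑ i, p i ^ 3 * Q i i ^ 2 := by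
    rw [Phi_diag p Q hQ hdiag _ (star_connected 2), he2]
    norm_num
  have hn2 : 2 ≤ Fintype.card V := by
    obtain ⟨e, he⟩ := Finset.card_pos.1 hE
    induction e using Sym2.ind with
    | _ a b =>
      have hadj : H.Adj a b := SimpleGraph.mem_edgeFinset.1 he
      exact Fintype.one_lt_card_iff.2 ⟨a, b, hadj.ne⟩
  rcases eq_or_lt_of_le hn2 with h2 | h3
  · -- card V = 2
    have hcard2 : Fintype.card V = 2 := h2.symm
    have hm1 : H.edgeFinset.card = 1 := by
      have := SimpleGraph.card_edgeFinset_le_card_choose_two (G := H)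
      rw [hcard2] at this
      simp only [Nat.choose_self] at this
      omega
    refine le_trans (le_of_eq ?_) (le_max_left _ _)
    unfold Psi
    rw [hΦ, hΦ1, hcard2, hm1]
    norm_num
  · -- 3 ≤ card V
    have h3n : 3 ≤ Fintype.card V := h3
    set n : ℕ := Fintype.card V with hn
    set m : ℕ := H.edgeFinset.card with hm
    have hnm : n ≤ m + 1 := card_le_of_connected H hconn
    have hn0 : (n : ℝ) ≠ 0 := Nat.cast_ne_zero.2 (by omega)
    set S : ℝ := ∑ i, p i ^ 3 * Q i i ^ 2 with hS
    have hS0 : 0 ≤ S :=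
      Finset.sum_nonneg fun i _ => mul_nonneg (pow_nonneg (hp i) 3) (sq_nonneg _)
    have h12 : |Phi p Q hQ H| ≤ S ^ ((n : ℝ) / 3) := by
      rw [hΦ]
      refine (Finset.abs_sum_le_sum_abs _ _).trans ?_
      have step : ∀ i : Fin k,
          |p i ^ n * Q i i ^ m| ≤ (p i ^ 3 * Q i i ^ 2) ^ ((n : ℝ) / 3) := by
        intro i
        have hb0 : (0:ℝ) ≤ |Q i i| := abs_nonneg _
        have hb1 : |Q i i| ≤ 1 := hQbd i i
        have hq2 : Q i i ^ 2 = |Q i i| ^ 2 := (sq_abs _).symm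
        rw [abs_mul, abs_pow, abs_pow, abs_of_nonneg (hp i), hq2]
        have e1 : (p i ^ 3 * |Q i i| ^ 2 : ℝ) ^ ((n:ℝ)/3)
            = p i ^ (n:ℝ) * |Q i i| ^ (2*(n:ℝ)/3) := by
          rw [Real.mul_rpow (pow_nonneg (hp i) 3) (pow_nonneg hb0 2),
              ← Real.rpow_natCast (p i) 3, ← Real.rpow_natCast |Q i i| 2,
              ← Real.rpow_mul (hp i), ← Real.rpow_mul hb0]
          push_cast
          rw [show (3:ℝ) * ((n:ℝ)/3) = (n:ℝ) by ring,
              show (2:ℝ) * ((n:ℝ)/3) = 2*(n:ℝ)/3 by ring]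
        rw [e1, ← Real.rpow_natCast (p i) n, ← Real.rpow_natCast |Q i i| m]
        refine mul_le_mul_of_nonneg_left ?_ (Real.rpow_nonneg (hp i) _)
        refine Real.rpow_le_rpow_of_exponent_ge' hb0 hb1 (by positivity) ?_
        have hnat : 2 * n ≤ 3 * m := by omega
        rw [div_le_iff₀ (by norm_num : (0:ℝ) < 3)]
        calc 2*(n:ℝ) = ((2*n : ℕ) : ℝ) := by push_cast; ring
          _ ≤ ((3*m : ℕ) : ℝ) := by exact_mod_cast hnat
          _ = (m:ℝ)*3 := by push_cast; ring
      refine (Finset.sum_le_sum fun i _ => step i).trans ?_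
      exact sum_rpow_le_aux Finset.univ _
        (fun i => mul_nonneg (pow_nonneg (hp i) 3) (sq_nonneg _))
        (by rw [le_div_iff₀ (by norm_num : (0:ℝ) < 3)]; norm_num
            exact_mod_cast h3n)
    have h3' : Psi p Q hQ H ≤ S ^ ((3:ℝ)⁻¹) := by
      unfold Psi
      calc |Phi p Q hQ H| ^ ((n:ℝ)⁻¹)
          ≤ (S ^ ((n:ℝ)/3)) ^ ((n:ℝ)⁻¹) :=
            Real.rpow_le_rpow (abs_nonneg _) h12 (by positivity)
        _ = S ^ ((3:ℝ)⁻¹) := by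
            rw [← Real.rpow_mul hS0]
            congr 1
            field_simp
    have h4 : Psi p Q hQ (StarGraph 2) = S ^ ((3:ℝ)⁻¹) := by
      unfold Psi
      rw [hΦ2, abs_of_nonneg hS0]
      norm_num
    exact le_trans (h4 ▸ h3') (le_max_right _ _)
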